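/- arXiv:1412.6822 — 3 statements merged into one kernel-verified Lean document; each statement's English description precedes it below -/
import Mathlib

section
/- (i) The word η contains no fourth power: for every nonempty finite word w over A, the word wwww is not a factor of η. (ii) The index (critical exponent) of the subshift generated by η equals 4: for every ε > 0 there exist a nonempty factor w of η and a prefix v of w such that wwwv is a factor of η and 3 + |v|/|w| > 4 − ε. -/
/-- The four-letter alphabet `A = {a, x, y, z}`. -/
inductive A : Type
  | a | x | y | z
  deriving DecidableEq, Repr

/-- The substitution `τ : a ↦ axa, x ↦ y, y ↦ z, z ↦ x`. -/
def tau : A → List A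
  | A.a => [A.a, A.x, A.a]
  | A.x => [A.y]
  | A.y => [A.z]
  | A.z => [A.x]

/-- The substitution `τ` extended to finite words by concatenation. -/
def tauW (w : List A) : List A := w.flatMap tau

/-- `pw n = τⁿ(a)`, a word of length `2^(n+1) - 1`. -/
def pw : ℕ → List A
  | 0 => [A.a]
  | n + 1 => tauW (pw n)

/-- The fixed point `η` of `τ`: the unique one-sided infinite word having every
`τⁿ(a)` as a prefix.  (Since `pw (n+1)` has length `2^(n+2) - 1 > n`, reading its
`n`-th letter is well defined and independent of the choice of a large enough iterate.) -/
def eta (n : ℕ) : A := (pw (n + 1)).getD n A.a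

/-- `w` is a (finite) factor of `η`. -/
def IsFactorEta (w : List A) : Prop :=
  ∃ i : ℕ, w = (List.range w.length).map (fun k => eta (i + k))

/-! ### The cycle map and the auxiliary sequence `D` -/

def g : A → A
  | A.a => A.a
  | A.x => A.y
  | A.y => A.z
  | A.z => A.x

def Daux : ℕ → ℕ → A
  | 0, _ => A.x
  | f + 1, k => if k % 2 = 0 then A.x else g (Daux f (k / 2))

def D (k : ℕ) : A := Daux k k

lemma Daux_spec : ∀ k f, k ≤ f → Daux f k = Daux k k := by
  intro k
  induction k using Nat.strong_induction_on with
  | _ k ih =>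
    intro f hf
    match k, f with
    | 0, 0 => rfl
    | 0, f + 1 => simp [Daux]
    | k + 1, f + 1 =>
      show (if (k+1) % 2 = 0 then A.x else g (Daux f ((k+1)/2)))
          = Daux (k+1) (k+1)
      have hk2 : (k+1)/2 < k + 1 := Nat.div_lt_self (by omega) (by omega)
      by_cases h : (k+1) % 2 = 0
      · simp [Daux, h]
      · simp only [Daux, h, if_false]
        rw [ih ((k+1)/2) hk2 f (by omega), ih ((k+1)/2) hk2 k (by omega)]

lemma D_def (k : ℕ) : D k = if k % 2 = 0 then A.x else g (D (k / 2)) := by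
  match k with
  | 0 => rfl
  | j + 1 =>
    show Daux (j+1) (j+1) = _
    have : Daux j ((j+1)/2) = D ((j+1)/2) :=
      Daux_spec ((j+1)/2) j (by omega)
    simp only [Daux, this]

lemma D_even (t : ℕ) : D (2 * t) = A.x := by
  rw [D_def]; simp [Nat.mul_mod_right]

lemma D_odd (t : ℕ) : D (2 * t + 1) = g (D t) := by
  rw [D_def]
  have h1 : (2 * t + 1) % 2 = 1 := by omega
  have h2 : (2 * t + 1) / 2 = t := by omega
  simp [h1, h2]

lemma D_ne_a : ∀ k, D k ≠ A.a := by
  intro k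
  induction k using Nat.strong_induction_on with
  | _ k ih =>
    rw [D_def]
    by_cases h : k % 2 = 0
    · simp [h]
    · simp only [h, if_false]
      have hk : k / 2 < k := Nat.div_lt_self (by omega) (by omega)
      have := ih (k / 2) hk
      cases hD : D (k / 2) <;> simp_all [g]

lemma g_inj : ∀ c c' : A, g c = g c' → c = c' := by
  intro c c'; cases c <;> cases c' <;> simp [g]

lemma g_eq_x : ∀ c : A, g c = A.x → c = A.z := by
  intro c; cases c <;> simp [g]

/-! ### The explicit description `E` of `η` -/

def E (n : ℕ) : A := if n % 2 = 0 then A.a else D (n / 2)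

lemma E_even (t : ℕ) : E (2 * t) = A.a := by simp [E, Nat.mul_mod_right]

lemma E_odd (t : ℕ) : E (2 * t + 1) = D t := by
  have h1 : (2 * t + 1) % 2 = 1 := by omega
  have h2 : (2 * t + 1) / 2 = t := by omega
  simp [E, h1, h2]

def prefE (n : ℕ) : List A := (List.range n).map E

@[simp] lemma prefE_length (n : ℕ) : (prefE n).length = n := by simp [prefE]

lemma prefE_succ (n : ℕ) : prefE (n + 1) = prefE n ++ [E n] := by
  simp [prefE, List.range_succ]

lemma tauW_append (u v : List A) : tauW (u ++ v) = tauW u ++ tauW v := by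
  unfold tauW; exact List.flatMap_append

lemma tau_D (k : ℕ) : tau (D k) = [g (D k)] := by
  have := D_ne_a k
  cases h : D k <;> simp_all [tau, g]

lemma tauW_W : ∀ L, tauW (prefE (2 * L + 1)) = prefE (2 * (2 * L + 1) + 1) := by
  intro L
  induction L with
  | zero =>
    show tauW (prefE 1) = prefE 3
    have h1 : prefE 1 = [A.a] := by simp [prefE, List.range_succ, E]
    have h3 : prefE 3 = [A.a, A.x, A.a] := by
      have e0 : E 0 = A.a := E_even 0
      have e1 : E 1 = A.x := by have := E_odd 0; simpa [D, Daux] using this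
      have e2 : E 2 = A.a := E_even 1
      simp [prefE, List.range_succ, e0, e1, e2]
    rw [h1, h3]; rfl
  | succ L ih =>
    have hL1 : 2 * (L + 1) + 1 = (2 * L + 1) + 1 + 1 := by ring
    have step : prefE (2 * (L + 1) + 1)
        = prefE (2 * L + 1) ++ [E (2 * L + 1), E (2 * L + 2)] := by
      rw [hL1, prefE_succ, prefE_succ]
      simp
    have e1 : E (2 * L + 1) = D L := E_odd L
    have e2 : E (2 * L + 2) = A.a := by have := E_even (L + 1); simpa [Nat.mul_add] using this
    have rhs : prefE (2 * (2 * (L + 1) + 1) + 1)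
        = prefE (2 * (2 * L + 1) + 1) ++ [g (D L), A.a, A.x, A.a] := by
      have h : 2 * (2 * (L + 1) + 1) + 1 = (2 * (2 * L + 1) + 1) + 1 + 1 + 1 + 1 := by ring
      have f1 : E (2 * (2 * L + 1) + 1) = g (D L) := by
        rw [E_odd, D_odd]
      have f2 : E (2 * (2 * L + 1) + 1 + 1) = A.a := by
        have h2 : 2 * (2 * L + 1) + 1 + 1 = 2 * (2 * L + 2) := by ring
        rw [h2, E_even]
      have f3 : E (2 * (2 * L + 1) + 1 + 1 + 1) = A.x := by
        have h3 : 2 * (2 * L + 1) + 1 + 1 + 1 = 2 * (2 * L + 2) + 1 := by ring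
        have h4 : 2 * L + 2 = 2 * (L + 1) := by ring
        rw [h3, E_odd, h4, D_even]
      have f4 : E (2 * (2 * L + 1) + 1 + 1 + 1 + 1) = A.a := by
        have h5 : 2 * (2 * L + 1) + 1 + 1 + 1 + 1 = 2 * (2 * L + 3) := by ring
        rw [h5, E_even]
      rw [h, prefE_succ, prefE_succ, prefE_succ, prefE_succ, f1, f2, f3, f4]
      simp
    have htail : tauW [D L, A.a] = [g (D L), A.a, A.x, A.a] := by
      show tau (D L) ++ (tau A.a ++ []) = _
      rw [tau_D]; rfl
    rw [rhs, step, tauW_append, ih, e1, e2, htail]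

lemma pw_eq : ∀ m, pw m = prefE (2 ^ (m + 1) - 1) := by
  intro m
  induction m with
  | zero =>
    show pw 0 = prefE 1
    simp [pw, prefE, List.range_succ, E]
  | succ m ih =>
    have h1 : 1 ≤ 2 ^ m := Nat.one_le_two_pow
    have harith : 2 ^ (m + 1) - 1 = 2 * (2 ^ m - 1) + 1 := by
      rw [pow_succ]; omega
    have harith2 : 2 * (2 * (2 ^ m - 1) + 1) + 1 = 2 ^ (m + 2) - 1 := by
      rw [pow_succ, pow_succ]; omega
    show tauW (pw m) = _
    rw [ih, harith, tauW_W, harith2]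

lemma pw_length (m : ℕ) : (pw m).length = 2 ^ (m + 1) - 1 := by
  rw [pw_eq]; simp

lemma eta_eq_E (n : ℕ) : eta n = E n := by
  have h1 : n < 2 ^ (n + 2) - 1 := by
    have h0 : n < 2 ^ n := Nat.lt_two_pow_self
    have h2 : 2 ^ (n + 2) = 4 * 2 ^ n := by ring
    omega
  show (pw (n + 1)).getD n A.a = E n
  rw [pw_eq]
  have hlen : n < (prefE (2 ^ (n + 2) - 1)).length := by simpa using h1
  rw [List.getD_eq_getElem _ _ hlen]
  simp [prefE]

/-! ### Factors of `η` via prefixes -/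

lemma factor_iff (f : List A) :
    IsFactorEta f ↔ ∃ i, prefE (i + f.length) = prefE i ++ f := by
  unfold IsFactorEta
  apply exists_congr; intro i
  have hsplit : prefE (i + f.length)
      = prefE i ++ (List.range f.length).map (fun k => E (i + k)) := by
    simp [prefE, List.range_add, List.map_map, Function.comp]
  have hmap : (List.range f.length).map (fun k => eta (i + k))
      = (List.range f.length).map (fun k => E (i + k)) :=
    List.map_congr_left (fun k _ => eta_eq_E (i + k))
  constructor
  · intro h
    rw [hsplit]
    congr 1
    rw [← hmap]
    exact h.symm
  · intro h
    rw [hsplit] at h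
    rw [hmap]
    exact (List.append_cancel_left h).symm

lemma prefE_prefix {m n : ℕ} (h : m ≤ n) : prefE m <+: prefE n := by
  refine ⟨(List.range (n - m)).map (fun k => E (m + k)), ?_⟩
  have : n = m + (n - m) := by omega
  rw [this]
  simp [prefE, List.range_add, List.map_map, Function.comp]

lemma prefix_prefE {u : List A} {n : ℕ} (h : u <+: prefE n) :
    u = prefE u.length := by
  have hle : u.length ≤ n := by
    have := h.length_le; simpa using this
  have ht := List.prefix_iff_eq_take.mp h
  nth_rewrite 1 [ht]
  rw [prefE, ← List.map_take, List.take_range, Nat.min_eq_left hle]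
  rfl

lemma tauW_prefix_mono {u v : List A} (h : u <+: v) : tauW u <+: tauW v := by
  obtain ⟨t, rfl⟩ := h
  exact ⟨tauW t, (tauW_append u t).symm⟩

lemma tauW_prefE (n : ℕ) :
    tauW (prefE n) = prefE (tauW (prefE n)).length := by
  apply prefix_prefE (n := 2 * (2 * n + 1) + 1)
  have h1 : prefE n <+: prefE (2 * n + 1) := prefE_prefix (by omega)
  have h2 := tauW_prefix_mono h1
  rwa [tauW_W] at h2

lemma factor_tau {f : List A} (h : IsFactorEta f) : IsFactorEta (tauW f) := by
  rw [factor_iff] at h ⊢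
  obtain ⟨i, h⟩ := h
  have h2 : tauW (prefE (i + f.length)) = tauW (prefE i) ++ tauW f := by
    rw [h, tauW_append]
  rw [tauW_prefE (i + f.length), tauW_prefE i] at h2
  refine ⟨(tauW (prefE i)).length, ?_⟩
  have hl : (tauW (prefE (i + f.length))).length
      = (tauW (prefE i)).length + (tauW f).length := by
    have := congrArg List.length h2
    simpa using this
  rw [← hl, h2]

/-! ### No fourth powers -/

lemma D_two_consec_z {u : ℕ} (z1 : D u = A.z) (z2 : D (u + 1) = A.z) : False := by
  rcases Nat.even_or_odd u with ⟨s, hs⟩ | ⟨s, hs⟩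
  · have h : u = 2 * s := by omega
    rw [h, D_even] at z1; exact absurd z1 (by simp)
  · have h : u + 1 = 2 * (s + 1) := by omega
    rw [h, D_even] at z2; exact absurd z2 (by simp)

lemma D_even' {p : ℕ} (h : p % 2 = 0) : D p = A.x := by
  have hp : p = 2 * (p / 2) := by omega
  rw [hp, D_even]

lemma D_half_z {p : ℕ} (hodd : p % 2 = 1) (hx : D p = A.x) : D (p / 2) = A.z := by
  apply g_eq_x
  have h : p = 2 * (p / 2) + 1 := by omega
  rw [← D_odd, ← h, hx]

lemma D_reduce : ∀ m, 0 < m → ∀ n, ¬ (∀ j < 3 * m, D (n + j) = D (n + j + m)) := by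
  intro m
  induction m using Nat.strong_induction_on with
  | _ m ih =>
    intro hm n H
    rcases Nat.even_or_odd m with ⟨m', hm'⟩ | ⟨q, hq⟩
    · -- m = 2 m' even
      have hm'pos : 0 < m' := by omega
      apply ih m' (by omega) hm'pos (n / 2)
      intro j hj
      have h2 : 2 * (n / 2 + j) + 1 - n < 3 * m := by omega
      have h3 := H (2 * (n / 2 + j) + 1 - n) h2
      have e1 : n + (2 * (n / 2 + j) + 1 - n) = 2 * (n / 2 + j) + 1 := by omega
      rw [e1] at h3
      have e2 : 2 * (n / 2 + j) + 1 + m = 2 * (n / 2 + j + m') + 1 := by omega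
      rw [e2, D_odd, D_odd] at h3
      exact g_inj _ _ h3
    · rcases Nat.eq_or_lt_of_le hm with h1 | hm2
      · -- m = 1 : D is constant on [n, n+3]
        have hm1 : m = 1 := by omega
        subst hm1
        have c0 := H 0 (by omega)
        have c1 := H 1 (by omega)
        have c2 := H 2 (by omega)
        simp only [Nat.add_zero] at c0
        -- all four values are equal; an even index gives value x
        have hall : D n = D (n + 1) ∧ D (n + 1) = D (n + 2) ∧ D (n + 2) = D (n + 3) := by
          refine ⟨?_, ?_, ?_⟩
          · simpa using c0
          · have : n + 1 + 1 = n + 2 := by omega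
            rwa [this] at c1
          · have : n + 2 + 1 = n + 3 := by omega
            rwa [this] at c2
        obtain ⟨d0, d1, d2⟩ := hall
        rcases Nat.even_or_odd n with ⟨u, hu⟩ | ⟨u, hu⟩
        · -- n even: odd indices n+1, n+3
          have hx : D n = A.x := D_even' (by omega)
          have z1 : D ((n + 1) / 2) = A.z := D_half_z (by omega) (by rw [← d0, hx])
          have z2 : D ((n + 3) / 2) = A.z := D_half_z (by omega) (by rw [← d2, ← d1, ← d0, hx])
          have e : (n + 3) / 2 = (n + 1) / 2 + 1 := by omega
          rw [e] at z2
          exact D_two_consec_z z1 z2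
        · -- n odd: odd indices n, n+2
          have hx : D (n + 1) = A.x := D_even' (by omega)
          have z1 : D (n / 2) = A.z := D_half_z (by omega) (by rw [d0, hx])
          have z2 : D ((n + 2) / 2) = A.z := D_half_z (by omega) (by rw [← d1, hx])
          have e : (n + 2) / 2 = n / 2 + 1 := by omega
          rw [e] at z2
          exact D_two_consec_z z1 z2
      · -- m odd, m ≥ 3
        have hq1 : 1 ≤ q := by omega
        rcases Nat.even_or_odd n with ⟨u, hu⟩ | ⟨u, hu⟩
        · -- n even: use j = 0 and j = 2
          have e1 := H 0 (by omega)
          have e2 := H 2 (by omega)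
          simp only [Nat.add_zero] at e1
          have hx1 : D n = A.x := D_even' (by omega)
          have hx2 : D (n + 2) = A.x := D_even' (by omega)
          have z1 : D ((n + m) / 2) = A.z := D_half_z (by omega) (by rw [← e1, hx1])
          have z2 : D ((n + 2 + m) / 2) = A.z := D_half_z (by omega) (by rw [← e2, hx2])
          have e : (n + 2 + m) / 2 = (n + m) / 2 + 1 := by omega
          rw [e] at z2
          exact D_two_consec_z z1 z2
        · -- n odd: use j = 1 and j = 3
          have e1 := H 1 (by omega)
          have e2 := H 3 (by omega)
          have hx1 : D (n + 1) = A.x := D_even' (by omega)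
          have hx2 : D (n + 3) = A.x := D_even' (by omega)
          have z1 : D ((n + 1 + m) / 2) = A.z := D_half_z (by omega) (by rw [← e1, hx1])
          have z2 : D ((n + 3 + m) / 2) = A.z := D_half_z (by omega) (by rw [← e2, hx2])
          have e : (n + 3 + m) / 2 = (n + 1 + m) / 2 + 1 := by omega
          rw [e] at z2
          exact D_two_consec_z z1 z2

lemma E_ne_a_of_odd {p : ℕ} (h : p % 2 = 1) : E p ≠ A.a := by
  have hp : p = 2 * (p / 2) + 1 := by omega
  rw [hp, E_odd]
  exact D_ne_a _

lemma no_fourth_power (w : List A) (hw : w ≠ []) :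
    ¬ IsFactorEta (w ++ w ++ w ++ w) := by
  intro h
  obtain ⟨i, h⟩ := h
  set L := w.length with hL
  have hL1 : 1 ≤ L := by
    rcases w with _ | _ <;> simp_all [hL]
  -- periodicity with period L on [i, i + 3L)
  have per : ∀ k, k < 3 * L → E (i + k) = E (i + k + L) := by
    intro k hk
    set list := w ++ w ++ w ++ w with hlist
    have hlen : list.length = 4 * L := by simp [hlist, hL]; omega
    set u := w ++ w ++ w with hu
    have hulen : u.length = 3 * L := by simp [hu, hL]; omega
    have A1 : list = u ++ w := by simp [hlist, hu]
    have A2 : list = w ++ u := by simp [hlist, hu, List.append_assoc]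
    have g1 : list.getD k A.a = u.getD k A.a := by
      rw [A1, List.getD_append _ _ _ _ (by omega)]
    have g2 : list.getD (k + L) A.a = u.getD k A.a := by
      rw [A2]
      rw [List.getD_append_right _ _ _ _ (by omega)]
      congr 1
      omega
    have g3 : list.getD k A.a = eta (i + k) := by
      rw [h]
      rw [List.getD_eq_getElem _ _ (by simp; omega)]
      simp
    have g4 : list.getD (k + L) A.a = eta (i + (k + L)) := by
      rw [h]
      rw [List.getD_eq_getElem _ _ (by simp; omega)]
      simp
    have := g3.symm.trans (g1.trans (g2.symm.trans g4))
    rw [eta_eq_E, eta_eq_E] at this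
    have harr : i + (k + L) = i + k + L := by omega
    rwa [harr] at this
  rcases Nat.even_or_odd L with ⟨m, hm⟩ | ⟨m, hm⟩
  · -- L = 2m even
    have hmpos : 0 < m := by omega
    apply D_reduce m hmpos (i / 2)
    intro j hj
    have hk : 2 * (i / 2 + j) + 1 - i < 3 * L := by omega
    have hp := per (2 * (i / 2 + j) + 1 - i) hk
    have e1 : i + (2 * (i / 2 + j) + 1 - i) = 2 * (i / 2 + j) + 1 := by omega
    rw [e1] at hp
    have e2 : 2 * (i / 2 + j) + 1 + L = 2 * (i / 2 + j + m) + 1 := by omega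
    rw [e2, E_odd, E_odd] at hp
    exact hp
  · -- L odd
    rcases Nat.even_or_odd i with ⟨u, hu⟩ | ⟨u, hu⟩
    · have hp := per 0 (by omega)
      have e1 : i + 0 = 2 * u := by omega
      rw [e1, E_even] at hp
      exact E_ne_a_of_odd (p := 2 * u + L) (by omega) hp.symm
    · have hp := per 1 (by omega)
      have e1 : i + 1 = 2 * (u + 1) := by omega
      rw [e1, E_even] at hp
      exact E_ne_a_of_odd (p := 2 * (u + 1) + L) (by omega) hp.symm

/-! ### The index is 4 -/

lemma tauW_iter_append (n : ℕ) (u v : List A) :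
    tauW^[n] (u ++ v) = tauW^[n] u ++ tauW^[n] v := by
  induction n generalizing u v with
  | zero => simp
  | succ n ihn =>
    rw [Function.iterate_succ_apply, Function.iterate_succ_apply,
      Function.iterate_succ_apply, tauW_append]
    exact ihn _ _

lemma pw_iter (n : ℕ) : pw n = tauW^[n] [A.a] := by
  induction n with
  | zero => rfl
  | succ n ihn =>
    show tauW (pw n) = _
    rw [ihn]
    exact (Function.iterate_succ_apply' tauW n [A.a]).symm

lemma factor_iter (n : ℕ) {f : List A} (h : IsFactorEta f) :
    IsFactorEta (tauW^[n] f) := by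
  induction n with
  | zero => simpa using h
  | succ n ihn =>
    rw [Function.iterate_succ_apply']
    exact factor_tau ihn

lemma single_nonA (n : ℕ) : ∀ c : A, c ≠ A.a → ∃ c', c' ≠ A.a ∧ tauW^[n] [c] = [c'] := by
  induction n with
  | zero => intro c hc; exact ⟨c, hc, rfl⟩
  | succ n ihn =>
    intro c hc
    rw [Function.iterate_succ_apply]
    have : ∃ c'', c'' ≠ A.a ∧ tauW [c] = [c''] := by
      cases c
      · exact absurd rfl hc
      · exact ⟨A.y, by simp, rfl⟩
      · exact ⟨A.z, by simp, rfl⟩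
      · exact ⟨A.x, by simp, rfl⟩
    obtain ⟨c'', hc'', hEq⟩ := this
    rw [hEq]
    exact ihn c'' hc''

lemma seed2_factor : IsFactorEta [A.a, A.x] := by
  rw [factor_iff]
  exact ⟨0, by decide⟩

lemma seedS_factor : IsFactorEta [A.a, A.x, A.a, A.x, A.a, A.x, A.a] := by
  rw [factor_iff]
  exact ⟨12, by decide⟩

/-- **Fourth-power freeness and the index of the subshift.**
(i) `η` contains no fourth power `wwww` of a nonempty word `w`.
(ii) The index (critical exponent) equals `4`: for every `ε > 0` there are a
nonempty factor `w` of `η` and a prefix `v` of `w` with `wwwv` a factor of `η`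
and `3 + |v|/|w| > 4 - ε`. -/
theorem no_fourth_powers_and_index_four :
    (∀ w : List A, w ≠ [] → ¬ IsFactorEta (w ++ w ++ w ++ w)) ∧
    (∀ ε : ℝ, 0 < ε →
      ∃ w v : List A, w ≠ [] ∧ IsFactorEta w ∧ v <+: w ∧
        IsFactorEta (w ++ w ++ w ++ v) ∧
        4 - ε < 3 + (v.length : ℝ) / (w.length : ℝ)) := by
  constructor
  · exact no_fourth_power
  · intro ε hε
    obtain ⟨n, hn⟩ : ∃ n : ℕ, (1 / 2 : ℝ) ^ (n + 1) < ε := by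
      obtain ⟨n, hn⟩ := exists_pow_lt_of_lt_one hε (by norm_num : (1 / 2 : ℝ) < 1)
      refine ⟨n, lt_of_le_of_lt ?_ hn⟩
      exact pow_le_pow_of_le_one (by norm_num) (by norm_num) (Nat.le_succ n)
    set w := tauW^[n] [A.a, A.x] with hw
    set v := pw n with hv
    obtain ⟨c', hc', hcEq⟩ := single_nonA n A.x (by simp)
    have hwv : w = v ++ [c'] := by
      rw [hw, hv, pw_iter, show ([A.a, A.x] : List A) = [A.a] ++ [A.x] from rfl,
        tauW_iter_append, hcEq]
    have hvlen : v.length = 2 ^ (n + 1) - 1 := by rw [hv]; exact pw_length n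
    have h21 : 1 ≤ 2 ^ (n + 1) := Nat.one_le_two_pow
    have hwlen : w.length = 2 ^ (n + 1) := by
      rw [hwv]; simp [hvlen]; omega
    have hwne : w ≠ [] := by
      intro hcon
      rw [hcon] at hwlen
      simp at hwlen
      omega
    have hwfac : IsFactorEta w := factor_iter n seed2_factor
    have hpre : v <+: w := ⟨[c'], hwv.symm⟩
    have hbigEq : w ++ w ++ w ++ v = tauW^[n] [A.a, A.x, A.a, A.x, A.a, A.x, A.a] := by
      rw [show ([A.a, A.x, A.a, A.x, A.a, A.x, A.a] : List A)
          = [A.a, A.x] ++ [A.a, A.x] ++ [A.a, A.x] ++ [A.a] from rfl]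
      rw [tauW_iter_append, tauW_iter_append, tauW_iter_append, hw, hv, pw_iter]
    have hbig : IsFactorEta (w ++ w ++ w ++ v) := by
      rw [hbigEq]
      exact factor_iter n seedS_factor
    refine ⟨w, v, hwne, hwfac, hpre, hbig, ?_⟩
    have hvR : (v.length : ℝ) = 2 ^ (n + 1) - 1 := by
      rw [hvlen, Nat.cast_sub h21]
      push_cast
      ring
    have hwR : (w.length : ℝ) = 2 ^ (n + 1) := by
      rw [hwlen]
      push_cast
      ring
    rw [hvR, hwR]
    have hp : (0 : ℝ) < 2 ^ (n + 1) := by positivity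
    have key : ((2 : ℝ) ^ (n + 1) - 1) / 2 ^ (n + 1) = 1 - 1 / 2 ^ (n + 1) := by
      field_simp
    have hn' : 1 / (2 : ℝ) ^ (n + 1) < ε := by
      rw [div_pow, one_pow] at hn
      exact hn
    rw [key]
    linarith
end

section
/- For every n ≥ 1 and L = 2ⁿ⁺¹ − 1, the complexity of η satisfies ℂ(L) ≤ 2L + (L+1)/2 = 2ⁿ⁺² + 2ⁿ − 2. -/
/-- The complexity function of `η`: the number of distinct factors of `η` of length `L`. -/
noncomputable def etaComplexity (L : ℕ) : ℕ :=
  {w : List A | w.length = L ∧ IsFactorEta w}.ncard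

/-- cyclic successor used at odd positions -/
def sub : A → A
  | A.a => A.x
  | A.x => A.y
  | A.y => A.z
  | A.z => A.x

/-- shape invariant of the prefixes: `a`, or `a c ...` with `c ≠ a`. -/
inductive Sh : List A → Prop
  | single : Sh [A.a]
  | cons (c : A) (hc : c ≠ A.a) {t : List A} (ht : Sh t) : Sh (A.a :: c :: t)

lemma tau_ne_a {c : A} (hc : c ≠ A.a) : tau c = [sub c] := by
  cases c <;> simp_all [tau, sub]

lemma sub_ne_a (c : A) : sub c ≠ A.a := by cases c <;> simp [sub]

lemma tauW_cons (c : A) (t : List A) : tauW (c :: t) = tau c ++ tauW t := by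
  simp [tauW]

lemma Sh_tauW {w : List A} (h : Sh w) : Sh (tauW w) := by
  induction h with
  | single =>
      have : tauW [A.a] = A.a :: A.x :: [A.a] := by simp [tauW, tau]
      rw [this]
      exact Sh.cons A.x (by decide) Sh.single
  | @cons c hc t ht ih =>
      have e : tauW (A.a :: c :: t) = A.a :: A.x :: A.a :: sub c :: tauW t := by
        rw [tauW_cons, tauW_cons, tau_ne_a hc]; rfl
      rw [e]
      exact Sh.cons A.x (by decide) (Sh.cons (sub c) (sub_ne_a c) ih)

lemma Sh_len_tauW {w : List A} (h : Sh w) : (tauW w).length = 2 * w.length + 1 := by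
  induction h with
  | single => simp [tauW, tau]
  | cons c hc ht ih =>
      rw [tauW_cons, tauW_cons, tau_ne_a hc]
      simp [tau] at ih ⊢
      omega

lemma Sh_pw (n : ℕ) : Sh (pw n) := by
  induction n with
  | zero => exact Sh.single
  | succ n ih => exact Sh_tauW ih

lemma pw_len (n : ℕ) : (pw n).length = 2 ^ (n + 1) - 1 := by
  induction n with
  | zero => simp [pw]
  | succ n ih =>
      have h := Sh_len_tauW (Sh_pw n)
      have h2 : (2:ℕ) ^ (n + 2) = 2 * 2 ^ (n + 1) := by ring
      have h3 : (0:ℕ) < 2 ^ (n + 1) := Nat.pow_pos (by norm_num)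
      show (tauW (pw n)).length = _
      omega

lemma Sh_even {w : List A} (h : Sh w) : ∀ i, 2 * i < w.length → w.getD (2 * i) A.a = A.a := by
  induction h with
  | single =>
      intro i hi
      simp at hi
      subst hi; rfl
  | @cons c hc t ht ih =>
      intro i hi
      match i with
      | 0 => rfl
      | i + 1 =>
          have hlen : 2 * i < t.length := by simp at hi; omega
          have : 2 * (i + 1) = (2 * i) + 1 + 1 := by ring
          rw [this, List.getD_cons_succ, List.getD_cons_succ]
          exact ih i hlen

lemma Sh_odd_tauW {w : List A} (h : Sh w) :
    ∀ j, 2 * j + 1 < (tauW w).length → (tauW w).getD (2 * j + 1) A.a = sub (w.getD j A.a) := by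
  induction h with
  | single =>
      intro j hj
      have e : tauW [A.a] = [A.a, A.x, A.a] := by simp [tauW, tau]
      rw [e] at hj ⊢
      simp at hj
      have : j = 0 := by omega
      subst this; rfl
  | @cons c hc t ht ih =>
      intro j hj
      have e : tauW (A.a :: c :: t) = A.a :: A.x :: A.a :: sub c :: tauW t := by
        rw [tauW_cons, tauW_cons, tau_ne_a hc]; rfl
      rw [e] at hj ⊢
      match j with
      | 0 => rfl
      | 1 => rfl
      | j + 2 =>
          have hlen : 2 * j + 1 < (tauW t).length := by simp at hj; omega
          have h1 : 2 * (j + 2) + 1 = (2 * j + 1) + 4 := by ring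
          rw [h1]
          show (tauW t).getD (2*j+1) A.a = sub (t.getD j A.a)
          exact ih j hlen

lemma pw_prefix_succ (N : ℕ) : pw N <+: pw (N + 1) := by
  induction N with
  | zero => exact ⟨[A.x, A.a], rfl⟩
  | succ N ih =>
      obtain ⟨t, ht⟩ := ih
      refine ⟨tauW t, ?_⟩
      show pw (N+1) ++ tauW t = tauW (pw (N+1))
      rw [← ht, tauW_append, ht]
      rfl

lemma pw_prefix {N M : ℕ} (h : N ≤ M) : pw N <+: pw M := by
  induction M, h using Nat.le_induction with
  | base => exact List.prefix_refl _
  | succ M hM ih => exact ih.trans (pw_prefix_succ M)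

lemma getD_prefix {l1 l2 : List A} (h : l1 <+: l2) {m : ℕ} (hm : m < l1.length) :
    l1.getD m A.a = l2.getD m A.a := by
  obtain ⟨t, ht⟩ := h
  rw [← ht, List.getD_append _ _ _ _ hm]

lemma getD_eta (N m : ℕ) (hm : m < (pw N).length) : (pw N).getD m A.a = eta m := by
  have hm2 : m < (pw (m + 1)).length := by
    rw [pw_len]
    have := Nat.lt_two_pow_self (n := m + 1)
    have : (2:ℕ) ^ (m + 1) ≤ 2 ^ (m + 2) := Nat.pow_le_pow_right (by norm_num) (by omega)
    omega
  show _ = (pw (m+1)).getD m A.a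
  rw [getD_prefix (pw_prefix (le_max_left N (m+1))) hm,
      getD_prefix (pw_prefix (le_max_right N (m+1))) hm2]

lemma eta_even (k : ℕ) : eta (2 * k) = A.a := by
  have hm : 2 * k < (pw (2 * k)).length := by
    rw [pw_len]
    have := Nat.lt_two_pow_self (n := 2 * k + 1)
    omega
  rw [← getD_eta (2 * k) _ hm]
  exact Sh_even (Sh_pw (2 * k)) k hm

lemma eta_odd (k : ℕ) : eta (2 * k + 1) = sub (eta k) := by
  have hk : k < (pw k).length := by
    rw [pw_len]
    have := Nat.lt_two_pow_self (n := k + 1)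
    omega
  have h1 : 2 * k + 1 < (pw (k + 1)).length := by
    show 2 * k + 1 < (tauW (pw k)).length
    rw [Sh_len_tauW (Sh_pw k)]; omega
  rw [← getD_eta (k + 1) _ h1, ← getD_eta k _ hk]
  exact Sh_odd_tauW (Sh_pw k) k h1

lemma eta_odd_ne_a (k : ℕ) : eta (2 * k + 1) ≠ A.a := by
  rw [eta_odd]; exact sub_ne_a _

/-! ### modular arithmetic helpers -/

lemma mod_shift {P i j : ℕ} (h : i % P = j % P) (k : ℕ) : (i + k) % P = (j + k) % P := by
  conv_lhs => rw [Nat.add_mod, h, ← Nat.add_mod]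

lemma eq_of_mod_zero {P m : ℕ} (hP : 0 < P) (h : m % P = 0) (h1 : 0 < m) (h2 : m < 2 * P) :
    m = P := by
  obtain ⟨q, hq⟩ := (Nat.dvd_iff_mod_eq_zero).mpr h
  have hq2 : q < 2 := by
    have : P * q < P * 2 := by omega
    exact Nat.lt_of_mul_lt_mul_left this
  have hq1 : q ≠ 0 := by rintro rfl; omega
  have : q = 1 := by omega
  subst this
  simpa using hq

lemma mod_zero_cases {P m : ℕ} (hP : 0 < P) (h : m % P = 0) (h1 : 0 < m) (h2 : m < 3 * P) :
    m = P ∨ m = 2 * P := by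
  obtain ⟨q, hq⟩ := (Nat.dvd_iff_mod_eq_zero).mpr h
  have hq3 : q < 3 := by
    have : P * q < P * 3 := by omega
    exact Nat.lt_of_mul_lt_mul_left this
  have hq1 : q ≠ 0 := by rintro rfl; omega
  interval_cases q <;> omega

lemma two_mul_mod (T k : ℕ) (hT : 0 < T) : (2 * k + 1) % (2 * T) = 2 * (k % T) + 1 := by
  have h := Nat.div_add_mod k T
  have hlt : k % T < T := Nat.mod_lt _ hT
  have e : 2 * k + 1 = 2 * T * (k / T) + (2 * (k % T) + 1) := by
    have : 2 * (T * (k / T)) = 2 * T * (k / T) := by ring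
    omega
  rw [e, Nat.mul_add_mod]
  exact Nat.mod_eq_of_lt (by omega)

lemma mod_pred {P r m : ℕ} (hr : 0 < r) (hrP : r < P) (h : (m + 1) % P = r) : m % P = r - 1 := by
  have h1 := Nat.div_add_mod (m + 1) P
  rw [h] at h1
  have e : m = P * ((m + 1) / P) + (r - 1) := by omega
  rw [e, Nat.mul_add_mod]
  exact Nat.mod_eq_of_lt (by omega)

/-- `eta m` only depends on `m mod 2^(t+1)` away from positions with valuation `> t`. -/
lemma eta_mod : ∀ (t m m' : ℕ), m % 2 ^ (t + 1) = m' % 2 ^ (t + 1) →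
    (m + 1) % 2 ^ (t + 1) ≠ 0 → eta m = eta m' := by
  intro t
  induction t with
  | zero =>
      intro m m' h1 h2
      norm_num at h1 h2
      have hm : m % 2 = 0 := by omega
      have hm' : m' % 2 = 0 := by omega
      obtain ⟨k, hk⟩ : ∃ k, m = 2 * k := ⟨m / 2, by omega⟩
      obtain ⟨k', hk'⟩ : ∃ k', m' = 2 * k' := ⟨m' / 2, by omega⟩
      rw [hk, hk', eta_even, eta_even]
  | succ t ih =>
      intro m m' h1 h2
      set T := 2 ^ (t + 1) with hT
      have hTpos : 0 < T := Nat.pow_pos (by norm_num)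
      have hPT : (2:ℕ) ^ (t + 2) = 2 * T := by rw [hT]; ring
      rw [hPT] at h1 h2
      have hpar : m % 2 = m' % 2 := by
        have e1 : m % 2 = m % (2 * T) % 2 := (Nat.mod_mod_of_dvd m ⟨T, rfl⟩).symm
        have e2 : m' % 2 = m' % (2 * T) % 2 := (Nat.mod_mod_of_dvd m' ⟨T, rfl⟩).symm
        rw [e1, e2, h1]
      rcases Nat.even_or_odd m with he | ho
      · obtain ⟨k, hk⟩ := he
        have hm : m = 2 * k := by omega
        have hm'e : m' % 2 = 0 := by omega
        obtain ⟨k', hk'⟩ : ∃ k', m' = 2 * k' := ⟨m' / 2, by omega⟩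
        rw [hm, hk', eta_even, eta_even]
      · obtain ⟨k, hk⟩ := ho
        have hm'o : m' % 2 = 1 := by omega
        obtain ⟨k', hk'⟩ : ∃ k', m' = 2 * k' + 1 := ⟨m' / 2, by omega⟩
        subst hk hk'
        rw [eta_odd, eta_odd]
        congr 1
        apply ih
        · have e1 := two_mul_mod T k hTpos
          have e2 := two_mul_mod T k' hTpos
          omega
        · intro hc
          apply h2
          have e : 2 * k + 1 + 1 = 2 * (k + 1) := by ring
          rw [e, Nat.mul_mod_mul_left, hc]

/-! ### the covering family -/

lemma eta_ne_a_of_odd {m : ℕ} (h : m % 2 = 1) : eta m ≠ A.a := by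
  have e : m = 2 * (m / 2) + 1 := by omega
  rw [e]; exact eta_odd_ne_a _

/-- the letter `η(2^n - 1)` (valuation exactly `n`). -/
def cstar (n : ℕ) : A := eta (2 ^ n - 1)

lemma cstar_ne_a (n : ℕ) (hn : 1 ≤ n) : cstar n ≠ A.a := by
  have h1 : (2:ℕ) ^ n = 2 ^ (n - 1) * 2 := by
    rw [← pow_succ, show n - 1 + 1 = n by omega]
  have h2 : (0:ℕ) < 2 ^ (n - 1) := Nat.pow_pos (by norm_num)
  exact eta_ne_a_of_odd (by omega)

def KeyF (n : ℕ) : Finset (ℕ × A) :=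
  ((Finset.Ioo 0 (2 ^ (n + 1))) ×ˢ ({A.x, A.y, A.z} : Finset A)) \
    ((Finset.Ioo 0 (2 ^ n)) ×ˢ ({cstar n} : Finset A))

lemma mem_of_ne_a {c : A} (h : c ≠ A.a) : c ∈ ({A.x, A.y, A.z} : Finset A) := by
  cases c <;> simp_all

lemma mem_KeyF {n : ℕ} {j : ℕ} {c : A} (h1 : 0 < j) (h2 : j < 2 ^ (n + 1)) (h3 : c ≠ A.a)
    (h4 : ¬(j < 2 ^ n ∧ c = cstar n)) : (j, c) ∈ KeyF n := by
  simp only [KeyF, Finset.mem_sdiff, Finset.mem_product, Finset.mem_Ioo, Finset.mem_singleton]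
  refine ⟨⟨⟨h1, h2⟩, mem_of_ne_a h3⟩, ?_⟩
  rintro ⟨⟨-, hj⟩, hc⟩
  exact h4 ⟨hj, hc⟩

def wordOf (n : ℕ) (q : ℕ × A) : List A :=
  (List.range (2 ^ (n + 1) - 1)).map
    (fun k => if (q.1 + k + 1) % 2 ^ (n + 1) = 0 then q.2 else eta (q.1 + k))

lemma cover (n : ℕ) (hn : 1 ≤ n) (i : ℕ) :
    ∃ q : ℕ × A, q ∈ KeyF n ∧
      wordOf n q = (List.range (2 ^ (n + 1) - 1)).map (fun k => eta (i + k)) := by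
  have hP2p : (2:ℕ) ^ (n + 1) = 2 * 2 ^ n := by ring
  have hp2 : (2:ℕ) ≤ 2 ^ n := by
    calc (2:ℕ) = 2 ^ 1 := by norm_num
    _ ≤ 2 ^ n := Nat.pow_le_pow_right (by norm_num) hn
  have hPpos : (0:ℕ) < 2 ^ (n + 1) := by omega
  obtain ⟨j, hj_eq, hjlt⟩ : ∃ j, i % 2 ^ (n + 1) = j ∧ j < 2 ^ (n + 1) :=
    ⟨_, rfl, Nat.mod_lt _ hPpos⟩
  have hij : i % 2 ^ (n + 1) = j % 2 ^ (n + 1) := by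
    rw [hj_eq, Nat.mod_eq_of_lt hjlt]
  have hdvd : (2:ℕ) ^ n ∣ 2 ^ (n + 1) := ⟨2, by omega⟩
  have hijp : i % 2 ^ n = j % 2 ^ n := by
    rw [← Nat.mod_mod_of_dvd i hdvd, ← Nat.mod_mod_of_dvd j hdvd, hij]
  set ch : A := eta (i + (2 ^ (n + 1) - 1 - j)) with hch
  by_cases hcase : j ≠ 0 ∧ ¬(j < 2 ^ n ∧ ch = cstar n)
  · -- Case A : key (j, ch)
    obtain ⟨hj0, hnb⟩ := hcase
    have hiPmod := Nat.div_add_mod i (2 ^ (n + 1))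
    rw [hj_eq] at hiPmod
    have hA : (2:ℕ) ^ (n + 1) * (i / 2 ^ (n + 1)) = 2 * (2 ^ n * (i / 2 ^ (n + 1))) := by
      rw [hP2p]; ring
    have hodd : (i + (2 ^ (n + 1) - 1 - j)) % 2 = 1 := by omega
    refine ⟨(j, ch), mem_KeyF (by omega) hjlt (eta_ne_a_of_odd hodd) hnb, ?_⟩
    apply List.map_congr_left
    intro k hk
    rw [List.mem_range] at hk
    show (if (j + k + 1) % 2 ^ (n + 1) = 0 then ch else eta (j + k)) = eta (i + k)
    split_ifs with h0
    · have hkP : j + k + 1 = 2 ^ (n + 1) :=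
        eq_of_mod_zero hPpos h0 (by omega) (by omega)
      have e : i + k = i + (2 ^ (n + 1) - 1 - j) := by omega
      rw [hch, ← e]
    · have h1 : (i + k) % 2 ^ (n + 1) = (j + k) % 2 ^ (n + 1) := mod_shift hij k
      have h2 : (i + (k + 1)) % 2 ^ (n + 1) = (j + (k + 1)) % 2 ^ (n + 1) :=
        mod_shift hij (k + 1)
      rw [← Nat.add_assoc, ← Nat.add_assoc] at h2
      exact (eta_mod n (i + k) (j + k) h1 (by omega)).symm
  · -- Case B : key (j + 2^n, cstar n)
    have hB : j ≠ 0 → (j < 2 ^ n ∧ ch = cstar n) := by tauto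
    have hjp : j < 2 ^ n := by
      by_cases h : j = 0
      · omega
      · exact (hB h).1
    refine ⟨(j + 2 ^ n, cstar n), mem_KeyF (by omega) (by omega) (cstar_ne_a n hn)
      (by omega), ?_⟩
    apply List.map_congr_left
    intro k hk
    rw [List.mem_range] at hk
    show (if (j + 2 ^ n + k + 1) % 2 ^ (n + 1) = 0 then cstar n else eta (j + 2 ^ n + k))
        = eta (i + k)
    split_ifs with h0
    · -- position of valuation exactly n in the window
      have hkP : j + 2 ^ n + k + 1 = 2 ^ (n + 1) :=
        eq_of_mod_zero hPpos h0 (by omega) (by omega)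
      have h1 : (i + k) % 2 ^ (n + 1) = (j + k) % 2 ^ (n + 1) := mod_shift hij k
      have hjk : j + k = 2 ^ n - 1 := by omega
      rw [hjk] at h1
      have h2 : (i + (k + 1)) % 2 ^ (n + 1) = (j + (k + 1)) % 2 ^ (n + 1) :=
        mod_shift hij (k + 1)
      have hjk1 : j + (k + 1) = 2 ^ n := by omega
      rw [hjk1, Nat.mod_eq_of_lt (show (2:ℕ) ^ n < 2 ^ (n + 1) by omega)] at h2
      rw [← Nat.add_assoc] at h2
      exact (eta_mod n (i + k) (2 ^ n - 1) h1 (by omega)).symm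
    · by_cases h2 : (j + k + 1) % 2 ^ (n + 1) = 0
      · -- the high-valuation slot; needs ch = cstar
        have hj0 : j ≠ 0 := by
          rintro rfl
          rw [Nat.zero_add, Nat.mod_eq_of_lt (show k + 1 < 2 ^ (n + 1) by omega)] at h2
          omega
        have hcs : ch = cstar n := (hB hj0).2
        have hkP : j + k + 1 = 2 ^ (n + 1) := eq_of_mod_zero hPpos h2 (by omega) (by omega)
        have e1 : i + k = i + (2 ^ (n + 1) - 1 - j) := by omega
        have e2 : j + 2 ^ n + k = 2 ^ (n + 1) + (2 ^ n - 1) := by omega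
        rw [e1, ← hch, hcs, e2]
        have h1 : (2 ^ (n + 1) + (2 ^ n - 1)) % 2 ^ (n + 1) = (2 ^ n - 1) % 2 ^ (n + 1) :=
          Nat.add_mod_left _ _
        have h2' : (2 ^ (n + 1) + (2 ^ n - 1) + 1) % 2 ^ (n + 1) ≠ 0 := by
          rw [show 2 ^ (n + 1) + (2 ^ n - 1) + 1 = 2 ^ (n + 1) + 2 ^ n by omega,
            Nat.add_mod_left, Nat.mod_eq_of_lt (by omega)]
          omega
        exact eta_mod n _ _ h1 h2'
      · -- generic position: congruence modulo 2^n suffices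
        have hpk : (j + k + 1) % 2 ^ n ≠ 0 := by
          intro hc
          rcases mod_zero_cases (show 0 < 2 ^ n by omega) hc (by omega) (by omega) with h | h
          · exact h0 (by rw [show j + 2 ^ n + k + 1 = 2 ^ (n + 1) by omega]; exact Nat.mod_self _)
          · exact h2 (by rw [show j + k + 1 = 2 ^ (n + 1) by omega]; exact Nat.mod_self _)
        have hm1 : (j + 2 ^ n + k) % 2 ^ n = (i + k) % 2 ^ n := by
          rw [show j + 2 ^ n + k = j + k + 2 ^ n by ring, Nat.add_mod_right]
          exact (mod_shift hijp k).symm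
        have hm2 : (j + 2 ^ n + k + 1) % 2 ^ n ≠ 0 := by
          rw [show j + 2 ^ n + k + 1 = j + k + 1 + 2 ^ n by ring, Nat.add_mod_right]
          exact hpk
        have hrw : n - 1 + 1 = n := by omega
        have := eta_mod (n - 1) (j + 2 ^ n + k) (i + k) (by rw [hrw]; exact hm1)
          (by rw [hrw]; exact hm2)
        exact this

lemma KeyF_card (n : ℕ) (hn : 1 ≤ n) : (KeyF n).card = 2 ^ (n + 2) + 2 ^ n - 2 := by
  have hsub : (Finset.Ioo 0 (2 ^ n)) ×ˢ ({cstar n} : Finset A) ⊆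
      (Finset.Ioo 0 (2 ^ (n + 1))) ×ˢ ({A.x, A.y, A.z} : Finset A) := by
    apply Finset.product_subset_product
    · apply Finset.Ioo_subset_Ioo le_rfl
      exact Nat.pow_le_pow_right (by norm_num) (by omega)
    · intro c hc
      rw [Finset.mem_singleton] at hc
      subst hc
      exact mem_of_ne_a (cstar_ne_a n hn)
  rw [KeyF, Finset.card_sdiff_of_subset hsub, Finset.card_product, Finset.card_product,
    Nat.card_Ioo, Nat.card_Ioo]
  have e3 : ({A.x, A.y, A.z} : Finset A).card = 3 := by decide
  have e1 : ({cstar n} : Finset A).card = 1 := Finset.card_singleton _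
  rw [e3, e1]
  have h1 : (2:ℕ) ^ (n + 1) = 2 * 2 ^ n := by ring
  have h2 : (2:ℕ) ^ (n + 2) = 4 * 2 ^ n := by ring
  have h3 : (2:ℕ) ≤ 2 ^ n := by
    calc (2:ℕ) = 2 ^ 1 := by norm_num
    _ ≤ 2 ^ n := Nat.pow_le_pow_right (by norm_num) hn
  omega


/-- **Upper bound on complexity**: for `L = |p⁽ⁿ⁾| = 2^(n+1) - 1` (with `n ≥ 1`),
`ℂ(L) ≤ 2L + (L+1)/2 = 2^(n+2) + 2^n - 2`. -/
theorem complexity_upper_bound (n : ℕ) (hn : 1 ≤ n) :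
    etaComplexity (2 ^ (n + 1) - 1) ≤ 2 ^ (n + 2) + 2 ^ n - 2 := by
  have hsub : {w : List A | w.length = 2 ^ (n + 1) - 1 ∧ IsFactorEta w} ⊆
      wordOf n '' ↑(KeyF n) := by
    rintro w ⟨hlen, i, hw⟩
    obtain ⟨q, hq, hq2⟩ := cover n hn i
    refine ⟨q, hq, ?_⟩
    rw [hq2, hw, hlen]
  calc etaComplexity (2 ^ (n + 1) - 1)
      ≤ (wordOf n '' ↑(KeyF n)).ncard :=
        Set.ncard_le_ncard hsub (((KeyF n).finite_toSet).image _)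
    _ ≤ (↑(KeyF n) : Set (ℕ × A)).ncard := Set.ncard_image_le ((KeyF n).finite_toSet)
    _ = (KeyF n).card := Set.ncard_coe_finset _
    _ = 2 ^ (n + 2) + 2 ^ n - 2 := KeyF_card n hn
end

section
/- (Gordon Lemma.) Let f, g : ℤ → ℝ be bounded sequences with f(n) ≠ 0 for every n ∈ ℤ. Suppose there exists a sequence of positive integers L_k → ∞ such that for every k and every n ∈ {1, …, L_k} one has f(n) = f(n − L_k) = f(n + L_k) and g(n) = g(n − L_k) = g(n + L_k). Then for every E ∈ ℝ, every function u : ℤ → ℂ satisfying f(n)u(n+1) + f(n−1)u(n−1) + g(n)u(n) = E·u(n) for all n ∈ ℤ and ∑_{n∈ℤ} |u(n)|² < ∞ vanishes identically. (Equivalently, the self-adjoint operator H on ℓ²(ℤ) acting by (Hφ)(n) = f(n)φ(n+1) + f(n−1)φ(n−1) + g(n)φ(n) has no eigenvalues.) -/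
open Matrix Filter

noncomputable def gordonP (A : ℤ → Matrix (Fin 2) (Fin 2) ℂ) (a : ℤ) : ℕ → Matrix (Fin 2) (Fin 2) ℂ
  | 0 => 1
  | (j+1) => A (a + j + 1) * gordonP A a j

lemma gordonP_mulVec (A : ℤ → Matrix (Fin 2) (Fin 2) ℂ) (Φ : ℤ → Fin 2 → ℂ)
    (hstep : ∀ n : ℤ, A (n + 1) *ᵥ Φ n = Φ (n + 1)) (a : ℤ) :
    ∀ j : ℕ, gordonP A a j *ᵥ Φ a = Φ (a + j) := by
  intro j
  induction j with
  | zero => simp [gordonP]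
  | succ j ih =>
      have h : gordonP A a (j+1) *ᵥ Φ a = A (a + j + 1) *ᵥ (gordonP A a j *ᵥ Φ a) := by
        rw [gordonP, Matrix.mulVec_mulVec]
      rw [h, ih, hstep (a + j)]
      congr 1
      push_cast; ring

lemma gordonP_congr (A : ℤ → Matrix (Fin 2) (Fin 2) ℂ) (a b : ℤ) :
    ∀ j : ℕ, (∀ i : ℕ, i < j → A (a + i + 1) = A (b + i + 1)) →
      gordonP A a j = gordonP A b j := by
  intro j
  induction j with
  | zero => intro _; rfl
  | succ j ih =>
      intro h
      rw [gordonP, gordonP, h j (Nat.lt_succ_self j),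
        ih (fun i hi => h i (hi.trans (Nat.lt_succ_self j)))]

lemma gordonP_succ_right (A : ℤ → Matrix (Fin 2) (Fin 2) ℂ) (a : ℤ) :
    ∀ j : ℕ, gordonP A a (j+1) = gordonP A (a+1) j * A (a+1) := by
  intro j
  induction j with
  | zero => simp [gordonP]
  | succ j ih =>
      rw [gordonP, ih, gordonP, ← Matrix.mul_assoc]
      congr 3
      push_cast; ring

lemma gordonCH (M : Matrix (Fin 2) (Fin 2) ℂ) (hdet : M.det = 1) (v : Fin 2 → ℂ) :
    M *ᵥ (M *ᵥ v) - M.trace • (M *ᵥ v) + v = 0 := by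
  have h : M * M - M.trace • M + M.det • 1 = 0 := by
    ext i j
    fin_cases i <;> fin_cases j <;>
      simp [Matrix.mul_apply, Fin.sum_univ_two, Matrix.trace, Matrix.diag, Matrix.det_fin_two,
        Matrix.one_apply] <;> ring
  have h2 := congrArg (fun N => N *ᵥ v) h
  simp [Matrix.sub_mulVec, Matrix.add_mulVec, Matrix.smul_mulVec,
    Matrix.mulVec_mulVec, hdet, Matrix.mul_apply, Fin.sum_univ_two] at h2 ⊢
  exact ⟨by linear_combination h2.1, by linear_combination h2.2⟩

/-- **Gordon Lemma.** Let `f, g : ℤ → ℝ` be bounded with `f` nowhere zero, and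
suppose there are positive integers `L_k → ∞` such that `f` and `g` repeat
three times over the windows `{1,…,L_k}`: `f(n) = f(n - L_k) = f(n + L_k)` and
`g(n) = g(n - L_k) = g(n + L_k)` for `1 ≤ n ≤ L_k`. Then for every `E ∈ ℝ`,
every square-summable solution `u : ℤ → ℂ` of
`f(n)u(n+1) + f(n-1)u(n-1) + g(n)u(n) = E·u(n)` vanishes identically; i.e. the
operator `(Hφ)(n) = f(n)φ(n+1) + f(n-1)φ(n-1) + g(n)φ(n)` on `ℓ²(ℤ)` has no
eigenvalues. -/
theorem gordon_lemma (f g : ℤ → ℝ)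
    (hf_bdd : ∃ M : ℝ, ∀ n : ℤ, |f n| ≤ M)
    (hg_bdd : ∃ M : ℝ, ∀ n : ℤ, |g n| ≤ M)
    (hf_ne : ∀ n : ℤ, f n ≠ 0)
    (L : ℕ → ℕ) (hL_pos : ∀ k, 0 < L k)
    (hL_tendsto : Filter.Tendsto L Filter.atTop Filter.atTop)
    (hper : ∀ k : ℕ, ∀ n : ℤ, 1 ≤ n → n ≤ (L k : ℤ) →
      f n = f (n - L k) ∧ f n = f (n + L k) ∧
      g n = g (n - L k) ∧ g n = g (n + L k))
    (E : ℝ) (u : ℤ → ℂ)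
    (hu : ∀ n : ℤ,
      (f n : ℂ) * u (n + 1) + (f (n - 1) : ℂ) * u (n - 1) + (g n : ℂ) * u n
        = (E : ℂ) * u n)
    (hl2 : Summable fun n : ℤ => ‖u n‖ ^ 2) :
    u = 0 := by
  have hfC : ∀ n : ℤ, (f n : ℂ) ≠ 0 := fun n => by
    exact_mod_cast Complex.ofReal_ne_zero.mpr (hf_ne n)
  -- transfer matrices and solution vectors
  set A : ℤ → Matrix (Fin 2) (Fin 2) ℂ :=
    fun n => !![((E : ℂ) - g n) / f n, -((f (n-1) : ℂ)) / f n; 1, 0] with hA_def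
  set Φ : ℤ → Fin 2 → ℂ := fun a => ![u (a+1), u a] with hΦ_def
  have hstep : ∀ n : ℤ, A (n + 1) *ᵥ Φ n = Φ (n + 1) := by
    intro n
    funext i
    fin_cases i
    · have h := hu (n+1)
      rw [show n + 1 - 1 = n by ring] at h
      have hne := hfC (n+1)
      have key : ((E:ℂ) - g (n+1)) / f (n+1) * u (n+1) + -((f n : ℂ)) / f (n+1) * u n
          = u (n+1+1) := by
        rw [div_mul_eq_mul_div, div_mul_eq_mul_div, ← add_div, div_eq_iff hne]
        linear_combination -h
      simpa [hA_def, hΦ_def, Matrix.mulVec, dotProduct, Fin.sum_univ_two] using key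
    · simp [hA_def, hΦ_def, Matrix.mulVec, dotProduct, Fin.sum_univ_two]
  -- the key smallness estimate for each k
  have hsmall : ∀ k : ℕ,
      ‖u 1‖ ≤ ‖u ((L k : ℤ) + 1)‖ + ‖u ((L k : ℤ) + (L k : ℤ) + 1)‖ + ‖u (1 - (L k : ℤ))‖ ∧
      min ‖u 0‖ ‖u 2‖ ≤
        ‖u (L k : ℤ)‖ + ‖u ((L k : ℤ) + (L k : ℤ))‖ + ‖u ((L k : ℤ) + 2)‖ + ‖u (2 - (L k : ℤ))‖ := by
    intro k
    have hℓ1 : (1 : ℤ) ≤ (L k : ℤ) := by exact_mod_cast hL_pos k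
    -- periodicity of f, g and boundary value f 0 = f ℓ
    have hfL : f (L k : ℤ) = f 0 := by
      have := (hper k (L k : ℤ) hℓ1 le_rfl).1
      simpa using this
    have hAplus : ∀ n : ℤ, 1 ≤ n → n ≤ (L k : ℤ) → A (n + (L k : ℤ)) = A n := by
      intro n h1 h2
      obtain ⟨hf1, hf2, hg1, hg2⟩ := hper k n h1 h2
      have hfm : f (n + (L k : ℤ) - 1) = f (n - 1) := by
        rcases eq_or_lt_of_le h1 with h | h
        · rw [← h]; simpa using hfL
        · have h3 := (hper k (n-1) (by omega) (by omega)).2.1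
          rw [show n + (L k : ℤ) - 1 = (n - 1) + (L k : ℤ) by ring, ← h3]
      simp only [hA_def]
      rw [← hf2, ← hg2, hfm]
    have hAminus : ∀ n : ℤ, 2 ≤ n → n ≤ (L k : ℤ) → A (n - (L k : ℤ)) = A n := by
      intro n h1 h2
      obtain ⟨hf1, hf2, hg1, hg2⟩ := hper k n (by omega) h2
      have hfm : f (n - (L k : ℤ) - 1) = f (n - 1) := by
        have h3 := (hper k (n-1) (by omega) (by omega)).1
        rw [show n - (L k : ℤ) - 1 = (n - 1) - (L k : ℤ) by ring, ← h3]
      simp only [hA_def]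
      rw [← hf1, ← hg1, hfm]
    obtain ⟨M, hM⟩ : ∃ M : ℕ, L k = M + 1 := ⟨L k - 1, (Nat.succ_pred_eq_of_pos (hL_pos k)).symm⟩
    set S : Matrix (Fin 2) (Fin 2) ℂ := gordonP A 1 M with hS
    set T : Matrix (Fin 2) (Fin 2) ℂ := gordonP A 0 (L k) with hT
    -- vector relations
    have hrel1 : T *ᵥ Φ 0 = Φ (L k : ℤ) := by
      rw [hT, gordonP_mulVec A Φ hstep 0 (L k)]
      norm_num
    have hrel2 : T *ᵥ Φ (L k : ℤ) = Φ ((L k : ℤ) + (L k : ℤ)) := by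
      have hshift : gordonP A (L k : ℤ) (L k) = gordonP A 0 (L k) := by
        apply gordonP_congr
        intro i hi
        rw [show ((L k : ℤ)) + i + 1 = ((i : ℤ) + 1) + (L k : ℤ) by ring,
          hAplus ((i : ℤ)+1) (by omega) (by omega)]
        congr 1; ring
      rw [hT, ← hshift, gordonP_mulVec A Φ hstep (L k : ℤ) (L k)]
    have hrel3 : S *ᵥ Φ (1 - (L k : ℤ)) = Φ 0 := by
      have hshift : gordonP A (1 - (L k : ℤ)) M = gordonP A 1 M := by
        apply gordonP_congr
        intro i hi
        rw [show (1 - (L k : ℤ)) + i + 1 = ((i : ℤ) + 2) - (L k : ℤ) by ring,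
          hAminus ((i : ℤ)+2) (by omega) (by omega)]
        congr 1; ring
      rw [hS, ← hshift, gordonP_mulVec A Φ hstep (1-(L k : ℤ)) M,
        show 1 - (L k : ℤ) + (M : ℤ) = 0 by omega]
    have hrel4 : S *ᵥ Φ 1 = Φ (L k : ℤ) := by
      rw [hS, gordonP_mulVec A Φ hstep 1 M, show 1 + (M : ℤ) = (L k : ℤ) by omega]
    have hrel5 : A 1 *ᵥ Φ 0 = Φ 1 := by simpa using hstep 0
    have hrel6 : A 1 *ᵥ Φ (L k : ℤ) = Φ ((L k : ℤ) + 1) := by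
      have h1 : A ((L k : ℤ) + 1) = A 1 := by
        rw [show (L k : ℤ) + 1 = 1 + (L k : ℤ) by ring]
        exact hAplus 1 le_rfl hℓ1
      have h2 := hstep (L k : ℤ)
      rwa [h1] at h2
    -- determinant of T
    have hdetA : ∀ n : ℤ, (A n).det = (f (n-1) : ℂ) / f n := by
      intro n
      simp only [hA_def]
      rw [Matrix.det_fin_two_of]
      field_simp
      ring
    have hdetP : ∀ j : ℕ, (gordonP A 0 j).det = (f 0 : ℂ) / f (j : ℤ) := by
      intro j
      induction j with
      | zero => simp [gordonP, div_self (hfC 0)]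
      | succ j ih =>
          rw [gordonP, Matrix.det_mul, ih, hdetA]
          rw [show ((0 : ℤ) + j + 1 - 1) = (j : ℤ) by ring,
            show ((0 : ℤ) + j + 1) = ((j : ℤ) + 1) by ring]
          push_cast
          have h1 := hfC (j : ℤ)
          have h2 := hfC ((j : ℤ) + 1)
          field_simp
    have hdetT : T.det = 1 := by
      rw [hT, hdetP (L k), hfL, div_self (hfC 0)]
    -- T = S * A 1, so T' := A 1 * S has same trace and det
    have hTSA : T = S * A 1 := by
      rw [hT, hM, hS, gordonP_succ_right]
      norm_num
    have hdetT' : (A 1 * S).det = 1 := by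
      rw [Matrix.det_mul, mul_comm, ← Matrix.det_mul, ← hTSA, hdetT]
    have htraceT' : (A 1 * S).trace = T.trace := by
      rw [Matrix.trace_mul_comm, ← hTSA]
    set t : ℂ := T.trace with ht
    -- Cayley–Hamilton identities
    have id1 : Φ ((L k : ℤ) + (L k : ℤ)) - t • Φ (L k : ℤ) + Φ 0 = 0 := by
      have h := gordonCH T hdetT (Φ 0)
      rwa [hrel1, hrel2] at h
    have id2 : Φ ((L k : ℤ) + 1) - t • Φ 1 + Φ (1 - (L k : ℤ)) = 0 := by
      have h := gordonCH (A 1 * S) hdetT' (Φ (1 - (L k : ℤ)))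
      rw [htraceT'] at h
      have hmv : ∀ v : Fin 2 → ℂ, (A 1 * S) *ᵥ v = A 1 *ᵥ (S *ᵥ v) :=
        fun v => (Matrix.mulVec_mulVec _ _ _).symm
      simp only [hmv] at h
      rw [hrel3, hrel5, hrel4, hrel6] at h
      exact h
    -- scalar consequences
    have e0 : u 1 = t * u ((L k : ℤ) + 1) - u ((L k : ℤ) + (L k : ℤ) + 1) := by
      have h := congrFun id1 0
      simp only [hΦ_def, Pi.add_apply, Pi.sub_apply, Pi.smul_apply, Pi.zero_apply,
        Matrix.cons_val_zero, smul_eq_mul, zero_add] at h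
      linear_combination h
    have e1 : u 0 = t * u (L k : ℤ) - u ((L k : ℤ) + (L k : ℤ)) := by
      have h := congrFun id1 1
      simp only [hΦ_def, Pi.add_apply, Pi.sub_apply, Pi.smul_apply, Pi.zero_apply,
        Matrix.cons_val_one, Matrix.head_cons, Matrix.cons_val_zero, smul_eq_mul, zero_add] at h
      linear_combination h
    have e2 : t * u 1 = u ((L k : ℤ) + 1) + u (1 - (L k : ℤ)) := by
      have h := congrFun id2 1
      simp only [hΦ_def, Pi.add_apply, Pi.sub_apply, Pi.smul_apply, Pi.zero_apply,
        Matrix.cons_val_one, Matrix.head_cons, Matrix.cons_val_zero, smul_eq_mul] at h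
      linear_combination -h
    have e3 : t * u 2 = u ((L k : ℤ) + 2) + u (2 - (L k : ℤ)) := by
      have h := congrFun id2 0
      simp only [hΦ_def, Pi.add_apply, Pi.sub_apply, Pi.smul_apply, Pi.zero_apply,
        Matrix.cons_val_zero, smul_eq_mul, zero_add] at h
      rw [show ((1:ℤ) + 1) = 2 by norm_num, show (L k : ℤ) + 1 + 1 = (L k : ℤ) + 2 by ring,
        show 1 - (L k : ℤ) + 1 = 2 - (L k : ℤ) by ring] at h
      linear_combination -h
    -- case analysis on ‖t‖
    rcases le_total ‖t‖ 1 with hcase | hcase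
    · constructor
      · calc ‖u 1‖ = ‖t * u ((L k : ℤ)+1) - u ((L k : ℤ)+(L k : ℤ)+1)‖ := by rw [← e0]
          _ ≤ ‖t * u ((L k : ℤ)+1)‖ + ‖u ((L k : ℤ)+(L k : ℤ)+1)‖ := norm_sub_le _ _
          _ = ‖t‖ * ‖u ((L k : ℤ)+1)‖ + ‖u ((L k : ℤ)+(L k : ℤ)+1)‖ := by rw [norm_mul]
          _ ≤ ‖u ((L k : ℤ)+1)‖ + ‖u ((L k : ℤ)+(L k : ℤ)+1)‖ + ‖u (1-(L k : ℤ))‖ := by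
              have h1 := norm_nonneg (u ((L k : ℤ)+1))
              have h2 := norm_nonneg (u (1-(L k : ℤ)))
              nlinarith
      · have h0 : ‖u 0‖ ≤ ‖u (L k : ℤ)‖ + ‖u ((L k : ℤ)+(L k : ℤ))‖ := by
          calc ‖u 0‖ = ‖t * u (L k : ℤ) - u ((L k : ℤ)+(L k : ℤ))‖ := by rw [← e1]
            _ ≤ ‖t‖ * ‖u (L k : ℤ)‖ + ‖u ((L k : ℤ)+(L k : ℤ))‖ := by
                rw [← norm_mul]; exact norm_sub_le _ _
            _ ≤ ‖u (L k : ℤ)‖ + ‖u ((L k : ℤ)+(L k : ℤ))‖ := by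
                have h1 := norm_nonneg (u (L k : ℤ)); nlinarith
        have h2 := norm_nonneg (u ((L k : ℤ)+2))
        have h3 := norm_nonneg (u (2-(L k : ℤ)))
        have hmin := min_le_left ‖u 0‖ ‖u 2‖
        linarith
    · constructor
      · have h1 : ‖u 1‖ ≤ ‖t‖ * ‖u 1‖ := by
          have := norm_nonneg (u 1); nlinarith
        calc ‖u 1‖ ≤ ‖t‖ * ‖u 1‖ := h1
          _ = ‖u ((L k : ℤ)+1) + u (1-(L k : ℤ))‖ := by rw [← norm_mul, e2]
          _ ≤ ‖u ((L k : ℤ)+1)‖ + ‖u (1-(L k : ℤ))‖ := norm_add_le _ _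
          _ ≤ ‖u ((L k : ℤ)+1)‖ + ‖u ((L k : ℤ)+(L k : ℤ)+1)‖ + ‖u (1-(L k : ℤ))‖ := by
              have := norm_nonneg (u ((L k : ℤ)+(L k : ℤ)+1)); linarith
      · have h2 : ‖u 2‖ ≤ ‖u ((L k : ℤ)+2)‖ + ‖u (2-(L k : ℤ))‖ := by
          have hb : ‖u 2‖ ≤ ‖t‖ * ‖u 2‖ := by
            have := norm_nonneg (u 2); nlinarith
          calc ‖u 2‖ ≤ ‖t‖ * ‖u 2‖ := hb
            _ = ‖u ((L k : ℤ)+2) + u (2-(L k : ℤ))‖ := by rw [← norm_mul, e3]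
            _ ≤ ‖u ((L k : ℤ)+2)‖ + ‖u (2-(L k : ℤ))‖ := norm_add_le _ _
        have h3 := norm_nonneg (u (L k : ℤ))
        have h4 := norm_nonneg (u ((L k : ℤ)+(L k : ℤ)))
        have hmin := min_le_right ‖u 0‖ ‖u 2‖
        linarith
  -- u tends to 0 at infinity
  have hu0 : Tendsto (fun n : ℤ => ‖u n‖) cofinite (nhds 0) := by
    have h1 : Tendsto (fun n : ℤ => ‖u n‖ ^ 2) cofinite (nhds 0) := hl2.tendsto_cofinite_zero
    have h2 : Tendsto (fun n : ℤ => Real.sqrt (‖u n‖ ^ 2)) cofinite (nhds (Real.sqrt 0)) :=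
      (Real.continuous_sqrt.tendsto 0).comp h1
    simpa [Real.sqrt_sq (norm_nonneg _)] using h2
  have hLZ : Tendsto (fun k => (L k : ℤ)) atTop atTop :=
    tendsto_natCast_atTop_atTop.comp hL_tendsto
  have hcof_top : (atTop : Filter ℤ) ≤ cofinite := by
    rw [Int.cofinite_eq]; exact le_sup_right
  have hcof_bot : (atBot : Filter ℤ) ≤ cofinite := by
    rw [Int.cofinite_eq]; exact le_sup_left
  have htop : ∀ c : ℕ → ℤ, Tendsto c atTop atTop →
      Tendsto (fun k => ‖u (c k)‖) atTop (nhds 0) := fun c hc =>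
    hu0.comp (hc.mono_right hcof_top)
  have hbot : ∀ c : ℕ → ℤ, Tendsto c atTop atBot →
      Tendsto (fun k => ‖u (c k)‖) atTop (nhds 0) := fun c hc =>
    hu0.comp (hc.mono_right hcof_bot)
  have t1 := htop (fun k => (L k : ℤ) + 1) (tendsto_atTop_add_const_right _ 1 hLZ)
  have t2 := htop (fun k => (L k : ℤ) + (L k : ℤ) + 1)
    (tendsto_atTop_add_const_right _ 1 (Filter.Tendsto.atTop_add_atTop hLZ hLZ))
  have hneg : Tendsto (fun k => -(L k : ℤ)) atTop atBot := tendsto_neg_atTop_atBot.comp hLZ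
  have t3 := hbot (fun k => 1 - (L k : ℤ))
    (by simpa [sub_eq_add_neg] using tendsto_atBot_add_const_left atTop (1:ℤ) hneg)
  have t4 := htop (fun k => (L k : ℤ)) hLZ
  have t5 := htop (fun k => (L k : ℤ) + (L k : ℤ)) (Filter.Tendsto.atTop_add_atTop hLZ hLZ)
  have t6 := htop (fun k => (L k : ℤ) + 2) (tendsto_atTop_add_const_right _ 2 hLZ)
  have t7 := hbot (fun k => 2 - (L k : ℤ))
    (by simpa [sub_eq_add_neg] using tendsto_atBot_add_const_left atTop (2:ℤ) hneg)
  -- conclude u 1 = 0 and (u 0 = 0 ∨ u 2 = 0)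
  have hu1 : u 1 = 0 := by
    have hε : Tendsto (fun k => ‖u ((L k : ℤ) + 1)‖ + ‖u ((L k : ℤ) + (L k : ℤ) + 1)‖
        + ‖u (1 - (L k : ℤ))‖) atTop (nhds 0) := by
      have := (t1.add t2).add t3
      simpa using this
    have hle : ‖u 1‖ ≤ 0 := ge_of_tendsto' hε (fun k => (hsmall k).1)
    have := norm_nonneg (u 1)
    rw [← norm_eq_zero]; linarith
  have hu02 : u 0 = 0 ∨ u 2 = 0 := by
    have hε : Tendsto (fun k => ‖u (L k : ℤ)‖ + ‖u ((L k : ℤ) + (L k : ℤ))‖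
        + ‖u ((L k : ℤ) + 2)‖ + ‖u (2 - (L k : ℤ))‖) atTop (nhds 0) := by
      have := ((t4.add t5).add t6).add t7
      simpa using this
    have hle : min ‖u 0‖ ‖u 2‖ ≤ 0 := ge_of_tendsto' hε (fun k => (hsmall k).2)
    rcases min_le_iff.mp hle with h | h
    · left; rw [← norm_eq_zero]; have := norm_nonneg (u 0); linarith
    · right; rw [← norm_eq_zero]; have := norm_nonneg (u 2); linarith
  -- propagation: two consecutive zeros kill everything
  have key : ∀ a : ℤ, u a = 0 → u (a + 1) = 0 → ∀ m : ℤ, u m = 0 := by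
    intro a h0 h1 m
    have fwd : ∀ j : ℕ, u (a + j) = 0 ∧ u (a + j + 1) = 0 := by
      intro j
      induction j with
      | zero => simpa using ⟨h0, h1⟩
      | succ j ih =>
          constructor
          · have : a + ((j : ℤ) + 1) = a + j + 1 := by ring
            rw [show ((j+1 : ℕ) : ℤ) = (j : ℤ) + 1 by push_cast; ring, this]
            exact ih.2
          · have h := hu (a + j + 1)
            rw [show a + j + 1 - 1 = a + j by ring, ih.1, ih.2] at h
            have : (f (a + j + 1) : ℂ) * u (a + j + 1 + 1) = 0 := by
              linear_combination h
            have := mul_eq_zero.mp this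
            rcases this with h' | h'
            · exact absurd h' (hfC _)
            · rw [show ((j+1 : ℕ) : ℤ) = (j : ℤ) + 1 by push_cast; ring]
              rw [show a + ((j : ℤ) + 1) + 1 = a + j + 1 + 1 by ring]
              exact h'
    have bwd : ∀ j : ℕ, u (a - j) = 0 ∧ u (a - j + 1) = 0 := by
      intro j
      induction j with
      | zero => simpa using ⟨h0, h1⟩
      | succ j ih =>
          constructor
          · have h := hu (a - j)
            rw [show a - j + 1 = a - j + 1 from rfl, ih.1, ih.2] at h
            have hz : (f (a - j - 1) : ℂ) * u (a - j - 1) = 0 := by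
              linear_combination h
            rcases mul_eq_zero.mp hz with h' | h'
            · exact absurd h' (hfC _)
            · rw [show a - ((j+1 : ℕ) : ℤ) = a - j - 1 by push_cast; ring]
              exact h'
          · rw [show a - ((j+1 : ℕ) : ℤ) + 1 = a - j by push_cast; ring]
            exact ih.1
    rcases le_total a m with h | h
    · have : m = a + ((m - a).toNat : ℤ) := by
        rw [Int.toNat_of_nonneg (by omega)]; ring
      rw [this]; exact (fwd _).1
    · have : m = a - ((a - m).toNat : ℤ) := by
        rw [Int.toNat_of_nonneg (by omega)]; ring
      rw [this]; exact (bwd _).1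
  funext n
  show u n = 0
  rcases hu02 with h | h
  · exact key 0 h (by simpa using hu1) n
  · exact key 1 hu1 (by simpa using h) n
end
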